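/- Under the LATE assumptions (Angrist-Imbens ACR theorem for ordered treatments), the Wald estimand equals the average causal response: (E[Y|Z=1]−E[Y|Z=0])/(E[D|Z=1]−E[D|Z=0]) = Σ_{d=1}^{D̄} ω_d · E[Y(d)−Y(d−1) | D(1) ≥ d > D(0)], where ω_d = P(D(1)≥d>D(0)) / Σ_{k=1}^{D̄} P(D(1)≥k>D(0)). -/

import Mathlib

open MeasureTheory ProbabilityTheory

variable {Ω : Type*}

/-- probability of a set -/
noncomputable def pr [MeasurableSpace Ω] (μ : MeasureTheory.Measure Ω) (A : Set Ω) : ℝ :=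
  (μ A).toReal

/-- conditional probability P(A | B) -/
noncomputable def cP [MeasurableSpace Ω] (μ : MeasureTheory.Measure Ω) (A B : Set Ω) : ℝ :=
  pr μ (A ∩ B) / pr μ B

/-- conditional expectation E[f | B] -/
noncomputable def cE [MeasurableSpace Ω] (μ : MeasureTheory.Measure Ω) (f : Ω → ℝ) (B : Set Ω) : ℝ :=
  (∫ ω in B, f ω ∂μ) / pr μ B

/-- observed treatment D = Z·D(1) + (1−Z)·D(0) -/
def obsD (Z D0 D1 : Ω → ℕ) : Ω → ℕ := fun ω => if Z ω = 1 then D1 ω else D0 ω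

/-- observed outcome Y = Y(D) -/
noncomputable def obsY (Z D0 D1 : Ω → ℕ) (Yp : ℕ → Ω → ℝ) : Ω → ℝ :=
  fun ω => Yp (obsD Z D0 D1 ω) ω


lemma tel_Ioc (F : ℕ → ℝ) (a : ℕ) : ∀ b, a ≤ b →
    ∑ d ∈ Finset.Ioc a b, (F d - F (d-1)) = F b - F a := by
  intro b
  induction b with
  | zero => intro h; simp [Nat.le_zero.mp h]
  | succ n ih =>
    intro h
    rcases Nat.lt_or_ge a (n+1) with h' | h'
    · have han : a ≤ n := Nat.lt_succ_iff.mp h'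
      rw [Finset.sum_Ioc_succ_top han, ih han]
      simp
    · have : a = n + 1 := le_antisymm h h'
      subst this; simp

lemma tel_cond (F : ℕ → ℝ) (a b N : ℕ) (hab : a ≤ b) (hbN : b ≤ N) :
    ∑ d ∈ Finset.Icc 1 N, (if d ≤ b ∧ a < d then F d - F (d-1) else 0) = F b - F a := by
  rw [← Finset.sum_filter]
  have hfil : (Finset.Icc 1 N).filter (fun d => d ≤ b ∧ a < d) = Finset.Ioc a b := by
    ext d
    simp only [Finset.mem_filter, Finset.mem_Icc, Finset.mem_Ioc]
    omega
  rw [hfil]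
  exact tel_Ioc F a b hab

lemma indep_setIntegral {Ω : Type*} [MeasurableSpace Ω] (μ : Measure Ω) [IsProbabilityMeasure μ]
    (D0 D1 Z : Ω → ℕ) (Yp : ℕ → Ω → ℝ)
    (hD0m : Measurable D0) (hD1m : Measurable D1) (hZm : Measurable Z)
    (hYm : ∀ d, Measurable (Yp d))
    (hindep : IndepFun (fun ω => (D0 ω, D1 ω, fun d => Yp d ω)) Z μ)
    (g : ℕ × ℕ × (ℕ → ℝ) → ℝ) (hg : Measurable g) (z : ℕ) :
    ∫ ω in {ω | Z ω = z}, g (D0 ω, D1 ω, fun d => Yp d ω) ∂μ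
      = (∫ ω, g (D0 ω, D1 ω, fun d => Yp d ω) ∂μ) * pr μ {ω | Z ω = z} := by
  set W : Ω → ℕ × ℕ × (ℕ → ℝ) := fun ω => (D0 ω, D1 ω, fun d => Yp d ω) with hW
  have hWm : Measurable W := hD0m.prodMk (hD1m.prodMk (measurable_pi_lambda _ hYm))
  set h : ℕ → ℝ := fun n => if n = z then 1 else 0 with hh
  have hhm : Measurable h := measurable_from_top
  have hsm : MeasurableSet {ω | Z ω = z} := hZm (measurableSet_singleton z)
  have h1 : ∫ ω in {ω | Z ω = z}, g (W ω) ∂μ = ∫ ω, g (W ω) * h (Z ω) ∂μ := by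
    rw [← integral_indicator hsm]
    congr 1; funext ω
    by_cases hω : Z ω = z <;> simp [Set.indicator, hω, hh]
  have h2 : ∫ ω, h (Z ω) ∂μ = pr μ {ω | Z ω = z} := by
    have he : (fun ω => h (Z ω)) = Set.indicator {ω | Z ω = z} (fun _ => (1:ℝ)) := by
      funext ω; by_cases hω : Z ω = z <;> simp [Set.indicator, hω, hh]
    rw [he, integral_indicator_const _ hsm]; simp [pr, measureReal_def]
  have hi : IndepFun (fun ω => g (W ω)) (fun ω => h (Z ω)) μ := hindep.comp hg hhm
  rw [h1, hi.integral_fun_mul_eq_mul_integral (hg.comp hWm).aestronglyMeasurable (hhm.comp hZm).aestronglyMeasurable, h2]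
/-- Angrist–Imbens average causal response theorem. -/
theorem wald_equals_acr
    [MeasurableSpace Ω] (μ : MeasureTheory.Measure Ω) [IsProbabilityMeasure μ]
    (Dbar : ℕ) (Z D0 D1 : Ω → ℕ) (Yp : ℕ → Ω → ℝ)
    (hZ01 : ∀ ω, Z ω = 0 ∨ Z ω = 1)
    (hZm : Measurable Z) (hD0m : Measurable D0) (hD1m : Measurable D1)
    (hD0b : ∀ ω, D0 ω ≤ Dbar) (hD1b : ∀ ω, D1 ω ≤ Dbar)
    (hYm : ∀ d, Measurable (Yp d)) (hYint : ∀ d, Integrable (Yp d) μ)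
    (hindep : IndepFun (fun ω => (D0 ω, D1 ω, fun d => Yp d ω)) Z μ)
    (hmono : ∀ᵐ ω ∂μ, D0 ω ≤ D1 ω)
    (hrel : cE μ (fun ω => (obsD Z D0 D1 ω : ℝ)) {ω | Z ω = 1} >
            cE μ (fun ω => (obsD Z D0 D1 ω : ℝ)) {ω | Z ω = 0})
    (hZ1pos : 0 < pr μ {ω | Z ω = 1}) (hZ1lt : pr μ {ω | Z ω = 1} < 1) :
    (cE μ (obsY Z D0 D1 Yp) {ω | Z ω = 1} - cE μ (obsY Z D0 D1 Yp) {ω | Z ω = 0}) /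
      (cE μ (fun ω => (obsD Z D0 D1 ω : ℝ)) {ω | Z ω = 1} -
        cE μ (fun ω => (obsD Z D0 D1 ω : ℝ)) {ω | Z ω = 0}) =
    ∑ d ∈ Finset.Icc 1 Dbar,
      (pr μ {ω | d ≤ D1 ω ∧ D0 ω < d} /
          ∑ k ∈ Finset.Icc 1 Dbar, pr μ {ω | k ≤ D1 ω ∧ D0 ω < k}) *
        cE μ (fun ω => Yp d ω - Yp (d - 1) ω) {ω | d ≤ D1 ω ∧ D0 ω < d} := by

  classical
  have hmeasNat : ∀ (s : Set ℕ), MeasurableSet s := fun s => trivial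
  have hAm : ∀ d : ℕ, MeasurableSet {ω | d ≤ D1 ω ∧ D0 ω < d} := by
    intro d
    have he : {ω | d ≤ D1 ω ∧ D0 ω < d} = D1 ⁻¹' (Set.Ici d) ∩ D0 ⁻¹' (Set.Iio d) := rfl
    rw [he]; exact (hD1m (hmeasNat _)).inter (hD0m (hmeasNat _))
  have hs1 : MeasurableSet {ω | Z ω = 1} := by
    have he : {ω | Z ω = 1} = Z ⁻¹' {1} := rfl
    rw [he]; exact hZm (hmeasNat _)
  have hs0 : MeasurableSet {ω | Z ω = 0} := by
    have he : {ω | Z ω = 0} = Z ⁻¹' {0} := rfl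
    rw [he]; exact hZm (hmeasNat _)
  have hP1ne : pr μ {ω | Z ω = 1} ≠ 0 := ne_of_gt hZ1pos
  have hP0pos : 0 < pr μ {ω | Z ω = 0} := by
    have hc : {ω | Z ω = 0} = {ω | Z ω = 1}ᶜ := by
      ext ω; rcases hZ01 ω with h | h <;> simp [h]
    have hm : μ {ω | Z ω = 1}ᶜ = 1 - μ {ω | Z ω = 1} := prob_compl_eq_one_sub hs1
    have : pr μ {ω | Z ω = 0} = 1 - pr μ {ω | Z ω = 1} := by
      rw [pr, hc, hm, ENNReal.toReal_sub_of_le prob_le_one (by simp), ENNReal.toReal_one, pr]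
    rw [this]; linarith
  have hP0ne : pr μ {ω | Z ω = 0} ≠ 0 := ne_of_gt hP0pos
  -- the key independence lemma, specialized
  have key : ∀ (g : ℕ × ℕ × (ℕ → ℝ) → ℝ), Measurable g → ∀ z : ℕ,
      (∫ ω in {ω | Z ω = z}, g (D0 ω, D1 ω, fun d => Yp d ω) ∂μ)
        = (∫ ω, g (D0 ω, D1 ω, fun d => Yp d ω) ∂μ) * pr μ {ω | Z ω = z} :=
    fun g hg z => indep_setIntegral μ D0 D1 Z Yp hD0m hD1m hZm hYm hindep g hg z
  -- the four transfer functions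
  set g1 : ℕ × ℕ × (ℕ → ℝ) → ℝ :=
    fun p => ∑ d ∈ Finset.range (Dbar+1), if p.2.1 = d then p.2.2 d else 0 with hg1def
  set g0 : ℕ × ℕ × (ℕ → ℝ) → ℝ :=
    fun p => ∑ d ∈ Finset.range (Dbar+1), if p.1 = d then p.2.2 d else 0 with hg0def
  set gD1 : ℕ × ℕ × (ℕ → ℝ) → ℝ := fun p => (p.2.1 : ℝ) with hgD1def
  set gD0 : ℕ × ℕ × (ℕ → ℝ) → ℝ := fun p => (p.1 : ℝ) with hgD0def
  have hg1m : Measurable g1 := by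
    apply Finset.measurable_sum
    intro d _
    exact Measurable.ite ((measurable_fst.comp measurable_snd) (hmeasNat {d}))
      ((measurable_pi_apply d).comp (measurable_snd.comp measurable_snd)) measurable_const
  have hg0m : Measurable g0 := by
    apply Finset.measurable_sum
    intro d _
    exact Measurable.ite (measurable_fst (hmeasNat {d}))
      ((measurable_pi_apply d).comp (measurable_snd.comp measurable_snd)) measurable_const
  have hgD1m : Measurable gD1 := measurable_from_top.comp (measurable_fst.comp measurable_snd)
  have hgD0m : Measurable gD0 := measurable_from_top.comp measurable_fst
  have hg1W : ∀ ω, g1 (D0 ω, D1 ω, fun d => Yp d ω) = Yp (D1 ω) ω := by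
    intro ω
    simp only [hg1def]
    rw [Finset.sum_ite_eq (Finset.range (Dbar+1)) (D1 ω) (fun d => Yp d ω),
      if_pos (Finset.mem_range.mpr (Nat.lt_succ_of_le (hD1b ω)))]
  have hg0W : ∀ ω, g0 (D0 ω, D1 ω, fun d => Yp d ω) = Yp (D0 ω) ω := by
    intro ω
    simp only [hg0def]
    rw [Finset.sum_ite_eq (Finset.range (Dbar+1)) (D0 ω) (fun d => Yp d ω),
      if_pos (Finset.mem_range.mpr (Nat.lt_succ_of_le (hD0b ω)))]
  -- integrability
  have hf1i : Integrable (fun ω => Yp (D1 ω) ω) μ := by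
    have he : (fun ω => Yp (D1 ω) ω)
        = fun ω => ∑ d ∈ Finset.range (Dbar+1), Set.indicator (D1 ⁻¹' {d}) (Yp d) ω := by
      funext ω
      rw [Finset.sum_eq_single (D1 ω)]
      · simp [Set.indicator_apply]
      · intro b _ hb
        simp [Set.indicator_apply, Ne.symm hb]
      · intro hmem
        exact absurd (Finset.mem_range.mpr (Nat.lt_succ_of_le (hD1b ω))) hmem
    rw [he]
    exact integrable_finset_sum _ fun d _ => (hYint d).indicator (hD1m (hmeasNat _))
  have hf0i : Integrable (fun ω => Yp (D0 ω) ω) μ := by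
    have he : (fun ω => Yp (D0 ω) ω)
        = fun ω => ∑ d ∈ Finset.range (Dbar+1), Set.indicator (D0 ⁻¹' {d}) (Yp d) ω := by
      funext ω
      rw [Finset.sum_eq_single (D0 ω)]
      · simp [Set.indicator_apply]
      · intro b _ hb
        simp [Set.indicator_apply, Ne.symm hb]
      · intro hmem
        exact absurd (Finset.mem_range.mpr (Nat.lt_succ_of_le (hD0b ω))) hmem
    rw [he]
    exact integrable_finset_sum _ fun d _ => (hYint d).indicator (hD0m (hmeasNat _))
  have hD1i : Integrable (fun ω => (D1 ω : ℝ)) μ := by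
    refine (integrable_const (Dbar : ℝ)).mono'
      ((measurable_from_top.comp hD1m).aestronglyMeasurable) ?_
    filter_upwards with ω
    rw [Real.norm_eq_abs, abs_of_nonneg (Nat.cast_nonneg _)]
    exact_mod_cast hD1b ω
  have hD0i : Integrable (fun ω => (D0 ω : ℝ)) μ := by
    refine (integrable_const (Dbar : ℝ)).mono'
      ((measurable_from_top.comp hD0m).aestronglyMeasurable) ?_
    filter_upwards with ω
    rw [Real.norm_eq_abs, abs_of_nonneg (Nat.cast_nonneg _)]
    exact_mod_cast hD0b ω
  -- the four conditional expectations
  have hcEY1 : cE μ (obsY Z D0 D1 Yp) {ω | Z ω = 1} = ∫ ω, Yp (D1 ω) ω ∂μ := by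
    have e1 : ∫ ω in {ω | Z ω = 1}, obsY Z D0 D1 Yp ω ∂μ
        = ∫ ω in {ω | Z ω = 1}, g1 (D0 ω, D1 ω, fun d => Yp d ω) ∂μ := by
      refine setIntegral_congr_fun hs1 fun ω hω => ?_
      have hz : Z ω = 1 := hω
      rw [hg1W ω]
      simp [obsY, obsD, hz]
    rw [cE, e1, key g1 hg1m 1, mul_div_assoc, div_self hP1ne, mul_one]
    simp only [hg1W]
  have hcEY0 : cE μ (obsY Z D0 D1 Yp) {ω | Z ω = 0} = ∫ ω, Yp (D0 ω) ω ∂μ := by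
    have e1 : ∫ ω in {ω | Z ω = 0}, obsY Z D0 D1 Yp ω ∂μ
        = ∫ ω in {ω | Z ω = 0}, g0 (D0 ω, D1 ω, fun d => Yp d ω) ∂μ := by
      refine setIntegral_congr_fun hs0 fun ω hω => ?_
      have hz : Z ω = 0 := hω
      rw [hg0W ω]
      simp [obsY, obsD, hz]
    rw [cE, e1, key g0 hg0m 0, mul_div_assoc, div_self hP0ne, mul_one]
    simp only [hg0W]
  have hcED1 : cE μ (fun ω => (obsD Z D0 D1 ω : ℝ)) {ω | Z ω = 1} = ∫ ω, (D1 ω : ℝ) ∂μ := by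
    have e1 : ∫ ω in {ω | Z ω = 1}, (obsD Z D0 D1 ω : ℝ) ∂μ
        = ∫ ω in {ω | Z ω = 1}, gD1 (D0 ω, D1 ω, fun d => Yp d ω) ∂μ := by
      refine setIntegral_congr_fun hs1 fun ω hω => ?_
      have hz : Z ω = 1 := hω
      simp [obsD, hz, hgD1def]
    rw [cE, e1, key gD1 hgD1m 1, mul_div_assoc, div_self hP1ne, mul_one]
  have hcED0 : cE μ (fun ω => (obsD Z D0 D1 ω : ℝ)) {ω | Z ω = 0} = ∫ ω, (D0 ω : ℝ) ∂μ := by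
    have e1 : ∫ ω in {ω | Z ω = 0}, (obsD Z D0 D1 ω : ℝ) ∂μ
        = ∫ ω in {ω | Z ω = 0}, gD0 (D0 ω, D1 ω, fun d => Yp d ω) ∂μ := by
      refine setIntegral_congr_fun hs0 fun ω hω => ?_
      have hz : Z ω = 0 := hω
      simp [obsD, hz, hgD0def]
    rw [cE, e1, key gD0 hgD0m 0, mul_div_assoc, div_self hP0ne, mul_one]
  -- telescoping, a.e.
  have htelY : (fun ω => Yp (D1 ω) ω - Yp (D0 ω) ω) =ᵐ[μ]
      (fun ω => ∑ d ∈ Finset.Icc 1 Dbar,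
        Set.indicator {ω | d ≤ D1 ω ∧ D0 ω < d} (fun ω => Yp d ω - Yp (d-1) ω) ω) := by
    filter_upwards [hmono] with ω hω
    have ht := tel_cond (fun d => Yp d ω) (D0 ω) (D1 ω) Dbar hω (hD1b ω)
    rw [← ht]
    refine Finset.sum_congr rfl fun d _ => ?_
    by_cases hc : d ≤ D1 ω ∧ D0 ω < d <;> simp [Set.indicator_apply, hc]
  have htelD : (fun ω => (D1 ω : ℝ) - (D0 ω : ℝ)) =ᵐ[μ]
      (fun ω => ∑ d ∈ Finset.Icc 1 Dbar,
        Set.indicator {ω | d ≤ D1 ω ∧ D0 ω < d} (fun _ => (1:ℝ)) ω) := by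
    filter_upwards [hmono] with ω hω
    have ht := tel_cond (fun d => ((d : ℕ) : ℝ)) (D0 ω) (D1 ω) Dbar hω (hD1b ω)
    rw [← ht]
    refine Finset.sum_congr rfl fun d _ => ?_
    by_cases hc : d ≤ D1 ω ∧ D0 ω < d
    · have h1d : 1 ≤ d := Nat.one_le_iff_ne_zero.mpr (by omega)
      simp only [Set.indicator_apply, Set.mem_setOf_eq, if_pos hc]
      rw [Nat.cast_sub h1d]
      push_cast
      ring
    · simp [Set.indicator_apply, hc]
  -- numerator and denominator
  have hNum : cE μ (obsY Z D0 D1 Yp) {ω | Z ω = 1} - cE μ (obsY Z D0 D1 Yp) {ω | Z ω = 0}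
      = ∑ d ∈ Finset.Icc 1 Dbar,
          ∫ ω in {ω | d ≤ D1 ω ∧ D0 ω < d}, (Yp d ω - Yp (d-1) ω) ∂μ := by
    rw [hcEY1, hcEY0, ← integral_sub hf1i hf0i, integral_congr_ae htelY]
    rw [integral_finset_sum]
    · exact Finset.sum_congr rfl fun d _ => integral_indicator (hAm d)
    · intro d _
      exact ((hYint d).sub (hYint (d-1))).indicator (hAm d)
  have hDen : cE μ (fun ω => (obsD Z D0 D1 ω : ℝ)) {ω | Z ω = 1}
        - cE μ (fun ω => (obsD Z D0 D1 ω : ℝ)) {ω | Z ω = 0}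
      = ∑ d ∈ Finset.Icc 1 Dbar, pr μ {ω | d ≤ D1 ω ∧ D0 ω < d} := by
    rw [hcED1, hcED0, ← integral_sub hD1i hD0i, integral_congr_ae htelD]
    rw [integral_finset_sum]
    · refine Finset.sum_congr rfl fun d _ => ?_
      rw [integral_indicator_const (1:ℝ) (hAm d)]
      simp [pr, measureReal_def]
    · intro d _
      exact (integrable_const (1:ℝ)).indicator (hAm d)
  have hSpos : 0 < ∑ d ∈ Finset.Icc 1 Dbar, pr μ {ω | d ≤ D1 ω ∧ D0 ω < d} := by
    rw [← hDen]; linarith [hrel]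
  have hSne : (∑ d ∈ Finset.Icc 1 Dbar, pr μ {ω | d ≤ D1 ω ∧ D0 ω < d}) ≠ 0 := ne_of_gt hSpos
  -- final algebra
  rw [hNum, hDen, Finset.sum_div]
  refine (Finset.sum_congr rfl fun d _ => ?_).symm
  rw [cE]
  by_cases hp : pr μ {ω | d ≤ D1 ω ∧ D0 ω < d} = 0
  · have hμ0 : μ {ω | d ≤ D1 ω ∧ D0 ω < d} = 0 := by
      have h2 := hp
      rw [pr] at h2
      rcases (ENNReal.toReal_eq_zero_iff _).mp h2 with h3 | h3
      · exact h3
      · exact absurd h3 (measure_ne_top μ _)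
    rw [Measure.restrict_eq_zero.mpr hμ0, integral_zero_measure]
    simp [hp]
  · field_simp
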